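/- Let ψ be the stream function of a nonnegative ω ∈ L¹ ∩ L²(ℝ²₊) with x₂ω ∈ L¹, and assume ω is symmetric in x₁ and non-increasing for x₁ > 0. Then for all x with x₂ ≤ |x₁|/A and A ≥ 1, ψ(x) ≤ C( (x₂/A)^{1/2}‖ω‖₁^{1/2}‖ω‖₂^{1/2} + A^{−1}‖ω‖₁ + x₂(A/x₁)² ‖x₂ω‖₁ ), with C independent of ω and A. -/

import Mathlib

open Real MeasureTheory
open Set
open scoped ENNReal

def upperHalf : Set (ℝ × ℝ) := {p | 0 < p.2}

noncomputable def sqdist (x y : ℝ × ℝ) : ℝ := (x.1 - y.1) ^ 2 + (x.2 - y.2) ^ 2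

noncomputable def halfPlaneGreen (x y : ℝ × ℝ) : ℝ :=
  (1 / (4 * π)) * Real.log (1 + 4 * x.2 * y.2 / sqdist x y)

lemma log_le_four_sqrt_sqrt {z : ℝ} (hz : 0 < z) :
    Real.log z ≤ 4 * Real.sqrt (Real.sqrt z) := by
  have h1 : Real.log (Real.sqrt (Real.sqrt z)) = Real.log z / 4 := by
    rw [Real.log_sqrt (Real.sqrt_nonneg z), Real.log_sqrt hz.le]; ring
  have h2 : Real.log (Real.sqrt (Real.sqrt z)) ≤ Real.sqrt (Real.sqrt z) - 1 :=
    Real.log_le_sub_one_of_pos (Real.sqrt_pos.mpr (Real.sqrt_pos.mpr hz))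
  nlinarith [Real.sqrt_nonneg (Real.sqrt z)]

lemma lint_rpow_half {ρ : ℝ} (hρ : 0 < ρ) :
    ∫⁻ u in Ioo (0:ℝ) ρ, ENNReal.ofReal (|u| ^ (-(1/2) : ℝ)) ≤ ENNReal.ofReal (2 * Real.sqrt ρ) := by
  have hcong : ∫⁻ u in Ioo (0:ℝ) ρ, ENNReal.ofReal (|u| ^ (-(1/2) : ℝ))
      = ∫⁻ u in Ioo (0:ℝ) ρ, ENNReal.ofReal (u ^ (-(1/2) : ℝ)) := by
    refine setLIntegral_congr_fun measurableSet_Ioo ?_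
    intro u hu
    beta_reduce
    rw [abs_of_pos hu.1]
  rw [hcong]
  have hint : IntegrableOn (fun u : ℝ => u ^ (-(1/2) : ℝ)) (Ioo 0 ρ) volume :=
    ((intervalIntegral.intervalIntegrable_rpow' (by norm_num)).1).mono_set Ioo_subset_Ioc_self
  have hnn : 0 ≤ᵐ[volume.restrict (Ioo (0:ℝ) ρ)] fun u : ℝ => u ^ (-(1/2) : ℝ) := by
    filter_upwards [ae_restrict_mem measurableSet_Ioo] with u hu
    exact Real.rpow_nonneg hu.1.le _
  rw [← ofReal_integral_eq_lintegral_ofReal hint hnn]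
  apply ENNReal.ofReal_le_ofReal
  have : ∫ u in Ioo (0:ℝ) ρ, u ^ (-(1/2) : ℝ) = ∫ u in (0:ℝ)..ρ, u ^ (-(1/2) : ℝ) := by
    rw [intervalIntegral.integral_of_le hρ.le, integral_Ioc_eq_integral_Ioo]
  rw [this, integral_rpow (Or.inl (by norm_num))]
  rw [show (-(1/2) : ℝ) + 1 = 1/2 by norm_num, Real.zero_rpow (by norm_num : (1/2 : ℝ) ≠ 0),
    ← Real.sqrt_eq_rpow]
  rw [sub_zero]
  rw [div_eq_mul_inv]
  norm_num
  linarith [Real.sqrt_nonneg ρ]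

lemma lint_abs_rpow_half {ρ : ℝ} (hρ : 0 < ρ) (x₁ : ℝ) :
    ∫⁻ t in Ioo (x₁ - ρ) (x₁ + ρ), ENNReal.ofReal (|t - x₁| ^ (-(1/2) : ℝ))
      ≤ ENNReal.ofReal (4 * Real.sqrt ρ) := by
  set f : ℝ → ℝ≥0∞ := fun u => ENNReal.ofReal (|u| ^ (-(1/2) : ℝ)) with hf
  have hfm : Measurable f := by
    apply Measurable.ennreal_ofReal
    exact (measurable_id.abs).pow_const _
  set k : ℝ → ℝ≥0∞ := fun u => (Ioo (-ρ) ρ).indicator f u with hk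
  have hkm : Measurable k := hfm.indicator measurableSet_Ioo
  have step1 : ∫⁻ t in Ioo (x₁ - ρ) (x₁ + ρ), ENNReal.ofReal (|t - x₁| ^ (-(1/2) : ℝ))
      = ∫⁻ t, k (t - x₁) := by
    rw [← lintegral_indicator measurableSet_Ioo]
    apply lintegral_congr
    intro t
    by_cases h : t ∈ Ioo (x₁ - ρ) (x₁ + ρ)
    · have h' : t - x₁ ∈ Ioo (-ρ) ρ := by
        constructor <;> [linarith [h.1]; linarith [h.2]]
      simp only [hk, hf, Set.indicator_apply, if_pos h, if_pos h']
    · have h' : t - x₁ ∉ Ioo (-ρ) ρ := by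
        intro hc; exact h ⟨by linarith [hc.1], by linarith [hc.2]⟩
      simp only [hk, Set.indicator_apply, if_neg h, if_neg h']
  have step2 : ∫⁻ t, k (t - x₁) = ∫⁻ u, k u :=
    (measurePreserving_sub_right volume x₁).lintegral_comp hkm
  have step3 : ∫⁻ u, k u = ∫⁻ u in Ioo (-ρ) ρ, f u := lintegral_indicator measurableSet_Ioo f
  have hsub : Ioo (-ρ) ρ ⊆ Ioo (-ρ) 0 ∪ Ico 0 ρ := by
    intro u hu
    by_cases h : u < 0
    · exact Or.inl ⟨hu.1, h⟩
    · exact Or.inr ⟨not_lt.mp h, hu.2⟩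
  have step4 : ∫⁻ u in Ioo (-ρ) ρ, f u ≤ (∫⁻ u in Ioo (-ρ) 0, f u) + ∫⁻ u in Ico 0 ρ, f u :=
    (lintegral_mono_set hsub).trans (lintegral_union_le _ _ _)
  have hpos : ∫⁻ u in Ico (0:ℝ) ρ, f u ≤ ENNReal.ofReal (2 * Real.sqrt ρ) := by
    rw [Measure.restrict_congr_set Ioo_ae_eq_Ico.symm]
    exact lint_rpow_half hρ
  have hneg : ∫⁻ u in Ioo (-ρ) 0, f u ≤ ENNReal.ofReal (2 * Real.sqrt ρ) := by
    set j : ℝ → ℝ≥0∞ := fun u => (Ioo (-ρ) 0).indicator f u with hj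
    have hjm : Measurable j := hfm.indicator measurableSet_Ioo
    have e1 : ∫⁻ u in Ioo (-ρ) 0, f u = ∫⁻ u, j u := (lintegral_indicator measurableSet_Ioo f).symm
    have e2 : ∫⁻ u, j u = ∫⁻ u, j (-u) :=
      ((Measure.measurePreserving_neg (volume : Measure ℝ)).lintegral_comp hjm).symm
    have e3 : ∀ u : ℝ, j (-u) = (Ioo (0:ℝ) ρ).indicator f u := by
      intro u
      by_cases h : u ∈ Ioo (0:ℝ) ρ
      · have h' : -u ∈ Ioo (-ρ) 0 := ⟨by linarith [h.2], by linarith [h.1]⟩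
        simp only [hj, hf, Set.indicator_apply, if_pos h, if_pos h', abs_neg]
      · have h' : -u ∉ Ioo (-ρ) 0 := by
          intro hc; exact h ⟨by linarith [hc.2], by linarith [hc.1]⟩
        simp only [hj, Set.indicator_apply, if_neg h, if_neg h']
    calc ∫⁻ u in Ioo (-ρ) 0, f u = ∫⁻ u, (Ioo (0:ℝ) ρ).indicator f u := by
          rw [e1, e2]; exact lintegral_congr e3
      _ = ∫⁻ u in Ioo (0:ℝ) ρ, f u := lintegral_indicator measurableSet_Ioo f
      _ ≤ ENNReal.ofReal (2 * Real.sqrt ρ) := lint_rpow_half hρ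
  calc ∫⁻ t in Ioo (x₁ - ρ) (x₁ + ρ), ENNReal.ofReal (|t - x₁| ^ (-(1/2) : ℝ))
      = ∫⁻ u in Ioo (-ρ) ρ, f u := by rw [step1, step2, step3]
    _ ≤ (∫⁻ u in Ioo (-ρ) 0, f u) + ∫⁻ u in Ico 0 ρ, f u := step4
    _ ≤ ENNReal.ofReal (2 * Real.sqrt ρ) + ENNReal.ofReal (2 * Real.sqrt ρ) := add_le_add hneg hpos
    _ = ENNReal.ofReal (4 * Real.sqrt ρ) := by
        rw [← ENNReal.ofReal_add (by positivity) (by positivity)]; ring_nf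

lemma greenNearBound {x y : ℝ × ℝ} {ρ : ℝ} (hρ : 0 < ρ) (hx2 : 0 < x.2) (hx2ρ : x.2 ≤ 2 * ρ)
    (hy2 : 0 < y.2) (hD : sqdist x y < ρ ^ 2) (hne : y.1 ≠ x.1) :
    halfPlaneGreen x y ≤ (Real.sqrt 5 / π) * Real.sqrt ρ * |y.1 - x.1| ^ (-(1/2) : ℝ) := by
  set u := y.1 - x.1 with hu
  have hu0 : u ≠ 0 := sub_ne_zero.mpr hne
  have hu2 : 0 < u ^ 2 := by positivity
  have habs : 0 < |u| := abs_pos.mpr hu0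
  have hueq : (x.1 - y.1) ^ 2 = u ^ 2 := by rw [hu]; ring
  have hsq_ge : u ^ 2 ≤ sqdist x y := by
    unfold sqdist; rw [← hueq] at hu2 ⊢; nlinarith [sq_nonneg (x.2 - y.2)]
  have hs_pos : 0 < sqdist x y := lt_of_lt_of_le hu2 hsq_ge
  have huρ : u ^ 2 < ρ ^ 2 := lt_of_le_of_lt hsq_ge hD
  have hy2' : y.2 < x.2 + ρ := by
    have h1 : (x.2 - y.2) ^ 2 < ρ ^ 2 := by
      unfold sqdist at hD; nlinarith [hueq, hu2]
    nlinarith [sq_nonneg (ρ + x.2 - y.2)]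
  have hnum : 4 * x.2 * y.2 ≤ 24 * ρ ^ 2 := by nlinarith
  have hq_le : 4 * x.2 * y.2 / sqdist x y ≤ 24 * ρ ^ 2 / u ^ 2 :=
    div_le_div₀ (by positivity) hnum hu2 hsq_ge
  have hq_nn : 0 ≤ 4 * x.2 * y.2 / sqdist x y := by positivity
  have h1q : 1 + 4 * x.2 * y.2 / sqdist x y ≤ 25 * ρ ^ 2 / u ^ 2 := by
    have h2 : (1:ℝ) ≤ ρ ^ 2 / u ^ 2 := (one_le_div hu2).mpr huρ.le
    have h3 : (25:ℝ) * ρ ^ 2 / u ^ 2 = 24 * ρ ^ 2 / u ^ 2 + ρ ^ 2 / u ^ 2 := by ring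
    linarith
  set z := 25 * ρ ^ 2 / u ^ 2 with hz
  have hz0 : 0 < z := by positivity
  have hlog : Real.log (1 + 4 * x.2 * y.2 / sqdist x y) ≤ Real.log z :=
    Real.log_le_log (by linarith) h1q
  have hsz : Real.sqrt z = 5 * ρ / |u| := by
    have : z = (5 * ρ / |u|) ^ 2 := by
      rw [div_pow, sq_abs]; rw [hz]; ring
    rw [this, Real.sqrt_sq (by positivity)]
  have hsz2 : Real.sqrt (5 * ρ / |u|) = Real.sqrt 5 * Real.sqrt ρ * |u| ^ (-(1/2) : ℝ) := by
    rw [show 5 * ρ / |u| = 5 * ρ * |u|⁻¹ by ring]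
    rw [Real.sqrt_mul (by positivity), Real.sqrt_mul (by norm_num), Real.sqrt_inv,
      Real.sqrt_eq_rpow |u|, ← Real.rpow_neg (abs_nonneg u)]
    try norm_num
  have hlog2 : Real.log z ≤ 4 * (Real.sqrt 5 * Real.sqrt ρ * |u| ^ (-(1/2) : ℝ)) := by
    have := log_le_four_sqrt_sqrt hz0
    rw [hsz, hsz2] at this; exact this
  have hπ : 0 < π := Real.pi_pos
  unfold halfPlaneGreen
  have hfin : Real.log (1 + 4 * x.2 * y.2 / sqdist x y)
      ≤ 4 * (Real.sqrt 5 * Real.sqrt ρ * |u| ^ (-(1/2) : ℝ)) := le_trans hlog hlog2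
  calc (1 / (4 * π)) * Real.log (1 + 4 * x.2 * y.2 / sqdist x y)
      ≤ (1 / (4 * π)) * (4 * (Real.sqrt 5 * Real.sqrt ρ * |u| ^ (-(1/2) : ℝ))) := by
        apply mul_le_mul_of_nonneg_left hfin (by positivity)
    _ = (Real.sqrt 5 / π) * Real.sqrt ρ * |u| ^ (-(1/2) : ℝ) := by
        field_simp

set_option maxHeartbeats 1000000 in
/-- Decay estimate for the stream function of a symmetric, monotone vorticity:
for `x₂ ≤ |x₁|/A`,
`ψ(x) ≤ C((x₂/A)^{1/2}‖ω‖₁^{1/2}‖ω‖₂^{1/2} + A⁻¹‖ω‖₁ + x₂ (A/x₁)² ‖x₂ω‖₁)`. -/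
theorem stream_function_decay :
    ∃ C > 0, ∀ ω : ℝ × ℝ → ℝ,
      (∀ p, 0 ≤ ω p) →
      Integrable ω (volume.restrict upperHalf) →
      MemLp ω 2 (volume.restrict upperHalf) →
      Integrable (fun p => p.2 * ω p) (volume.restrict upperHalf) →
      (∀ x₁ x₂ : ℝ, ω (x₁, x₂) = ω (-x₁, x₂)) →
      (∀ x₂ : ℝ, 0 < x₂ → ∀ a b : ℝ, 0 < a → a ≤ b → ω (b, x₂) ≤ ω (a, x₂)) →
      ∀ A : ℝ, 1 ≤ A → ∀ x : ℝ × ℝ, 0 < x.2 → x.2 ≤ |x.1| / A →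
        (∫ y in upperHalf, halfPlaneGreen x y * ω y) ≤
          C * (Real.sqrt (x.2 / A) * (∫ p in upperHalf, ω p) ^ ((1 : ℝ) / 2) *
                (∫ p in upperHalf, (ω p) ^ 2) ^ ((1 : ℝ) / 4) +
              A⁻¹ * (∫ p in upperHalf, ω p) +
              x.2 * (A / x.1) ^ 2 * (∫ p in upperHalf, p.2 * ω p)) := by
  refine ⟨10, by norm_num, ?_⟩
  intro ω hω hInt hL2 hInt2 hsymm hmono A hA x hx2 hxA
  clear hL2
  have hπ : 0 < π := Real.pi_pos
  have hA0 : (0:ℝ) < A := lt_of_lt_of_le one_pos hA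
  have h_upper : MeasurableSet upperHalf := measurableSet_lt measurable_const measurable_snd
  have habs : 0 < |x.1| := by
    by_contra h
    push_neg at h
    have h0 : |x.1| = 0 := le_antisymm h (abs_nonneg _)
    rw [h0, zero_div] at hxA
    linarith
  have hx1 : x.1 ≠ 0 := by
    intro h; rw [h, abs_zero] at habs; exact lt_irrefl 0 habs
  set ρ := |x.1| / (2 * A) with hρdef
  have hρ : 0 < ρ := by positivity
  have hx2ρ : x.2 ≤ 2 * ρ := by
    have : 2 * ρ = |x.1| / A := by rw [hρdef]; field_simp
    rw [this]; exact hxA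
  have hρ2 : ρ ≤ |x.1| / 2 := by
    rw [hρdef]; gcongr; linarith
  set W₁ := ∫ p in upperHalf, ω p with hW₁def
  set W₂ := ∫ p in upperHalf, p.2 * ω p with hW₂def
  have hW₁ : 0 ≤ W₁ := integral_nonneg hω
  have hW₂ : 0 ≤ W₂ := by
    apply integral_nonneg_of_ae
    filter_upwards [ae_restrict_mem h_upper] with p hp
    exact mul_nonneg (le_of_lt hp) (hω p)
  -- nonnegativity of the Green function on the upper half plane
  have hGpos : ∀ y : ℝ × ℝ, 0 < y.2 → 0 ≤ halfPlaneGreen x y := by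
    intro y hy2
    unfold halfPlaneGreen
    apply mul_nonneg (by positivity)
    apply Real.log_nonneg
    have h1 : 0 ≤ 4 * x.2 * y.2 / sqdist x y := by
      apply div_nonneg (by positivity)
      unfold sqdist; positivity
    linarith
  have hGmeas : Measurable fun y : ℝ × ℝ => halfPlaneGreen x y := by
    unfold halfPlaneGreen sqdist
    exact measurable_const.mul (Real.measurable_log.comp (by fun_prop))
  have hGω_aesm : AEStronglyMeasurable (fun y => halfPlaneGreen x y * ω y)
      (volume.restrict upperHalf) := hGmeas.aestronglyMeasurable.mul hInt.1
  have hae_nonneg : 0 ≤ᵐ[volume.restrict upperHalf] fun y => halfPlaneGreen x y * ω y := by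
    filter_upwards [ae_restrict_mem h_upper] with y hy
    exact mul_nonneg (hGpos y hy) (hω y)
  rw [integral_eq_lintegral_of_nonneg_ae hae_nonneg hGω_aesm]
  -- measurable representative
  obtain ⟨g, hg_sm, hgae⟩ := hInt.1
  have hgm : Measurable g := hg_sm.measurable
  set F : ℝ → ℝ≥0∞ := fun t => ∫⁻ s : ℝ, ENNReal.ofReal (ω (s, t)) with hFdef
  set Fg : ℝ → ℝ≥0∞ := fun t => ∫⁻ s : ℝ, ENNReal.ofReal (g (s, t)) with hFgdef
  have hFgm : Measurable Fg := by
    apply Measurable.lintegral_prod_left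
    exact hgm.ennreal_ofReal
  -- Claim A
  have claimA : ∀ y : ℝ × ℝ, 0 < y.2 → |y.1 - x.1| < ρ →
      ENNReal.ofReal (ω y) ≤ ENNReal.ofReal (2 / |x.1|) * F y.2 := by
    intro y hy2 hyρ
    have hb : |x.1| / 2 ≤ |y.1| := by
      have h1 : |x.1| - |y.1| ≤ |x.1 - y.1| := abs_sub_abs_le_abs_sub x.1 y.1
      rw [abs_sub_comm] at h1
      linarith
    have hb0 : 0 < |y.1| := lt_of_lt_of_le (by positivity) hb
    have hωeq : ω y = ω (|y.1|, y.2) := by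
      rcases le_or_gt 0 y.1 with h | h
      · rw [abs_of_nonneg h, Prod.mk.eta]
      · rw [abs_of_neg h, ← hsymm y.1 y.2, Prod.mk.eta]
    have hF : ENNReal.ofReal (ω (|y.1|, y.2)) * ENNReal.ofReal (|x.1| / 2) ≤ F y.2 := by
      have h0 : ENNReal.ofReal (ω (|y.1|, y.2)) * ENNReal.ofReal (|x.1| / 2)
          = ∫⁻ s in Ioo (0:ℝ) (|x.1| / 2), ENNReal.ofReal (ω (|y.1|, y.2)) := by
        rw [setLIntegral_const, Real.volume_Ioo, sub_zero]
      rw [h0]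
      refine le_trans ?_ (setLIntegral_le_lintegral (Ioo (0:ℝ) (|x.1|/2)) fun s => ENNReal.ofReal (ω (s, y.2)))
      rw [← lintegral_indicator measurableSet_Ioo, ← lintegral_indicator measurableSet_Ioo]
      apply lintegral_mono
      intro s
      by_cases hs : s ∈ Ioo (0:ℝ) (|x.1| / 2)
      · simp only [Set.indicator_of_mem hs]
        exact ENNReal.ofReal_le_ofReal (hmono y.2 hy2 s |y.1| hs.1 (le_trans hs.2.le hb))
      · simp only [Set.indicator_of_notMem hs, le_refl]
    have hone : (2 / |x.1|) * (|x.1| / 2) = 1 := by field_simp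
    calc ENNReal.ofReal (ω y)
        = ENNReal.ofReal (2 / |x.1|) * (ENNReal.ofReal (ω (|y.1|, y.2)) * ENNReal.ofReal (|x.1| / 2)) := by
          rw [mul_comm (ENNReal.ofReal (ω (|y.1|, y.2))), ← mul_assoc,
            ← ENNReal.ofReal_mul (by positivity), hone, ENNReal.ofReal_one, one_mul, hωeq]
      _ ≤ ENNReal.ofReal (2 / |x.1|) * F y.2 := mul_le_mul_right hF _
  -- null sets
  have h_line_null : (volume : Measure (ℝ × ℝ)) {y : ℝ × ℝ | y.1 = x.1} = 0 := by
    have hset : {y : ℝ × ℝ | y.1 = x.1} = ({x.1} : Set ℝ) ×ˢ (univ : Set ℝ) := by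
      ext y
      simp only [Set.mem_setOf_eq, Set.mem_prod, Set.mem_singleton_iff, Set.mem_univ, and_true]
    rw [hset, Measure.volume_eq_prod, Measure.prod_prod, Real.volume_singleton, zero_mul]
  have hgae' : (volume : Measure (ℝ × ℝ)) ({p : ℝ × ℝ | ω p ≠ g p} ∩ upperHalf) = 0 := by
    have h0 : (volume.restrict upperHalf) {p : ℝ × ℝ | ω p ≠ g p} = 0 := ae_iff.mp hgae
    rwa [Measure.restrict_apply' h_upper] at h0
  set M := toMeasurable volume ({p : ℝ × ℝ | ω p ≠ g p} ∩ upperHalf) with hMdef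
  have hMm : MeasurableSet M := measurableSet_toMeasurable _ _
  have hM0 : volume M = 0 := by rw [hMdef, measure_toMeasurable]; exact hgae'
  have hsubM : {p : ℝ × ℝ | ω p ≠ g p} ∩ upperHalf ⊆ M := subset_toMeasurable _ _
  have hM'm : MeasurableSet (Prod.swap ⁻¹' M : Set (ℝ × ℝ)) := measurable_swap hMm
  have hM'0 : (volume : Measure (ℝ × ℝ)) (Prod.swap ⁻¹' M) = 0 := by
    have h1 : (volume : Measure (ℝ × ℝ)) (Prod.swap ⁻¹' M)
        = ((volume : Measure (ℝ × ℝ)).map Prod.swap) M := by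
      rw [Measure.map_apply measurable_swap hMm]
    rw [h1, Measure.volume_eq_prod, Measure.prod_swap, ← Measure.volume_eq_prod]
    exact hM0
  have hslice0 : ∀ᵐ t : ℝ, (volume : Measure ℝ) (Prod.mk t ⁻¹' (Prod.swap ⁻¹' M)) = 0 := by
    have h2 : ((volume : Measure ℝ).prod (volume : Measure ℝ)) (Prod.swap ⁻¹' M) = 0 := by
      rw [← Measure.volume_eq_prod]; exact hM'0
    exact (Measure.measure_prod_null hM'm).mp h2
  have hFFg : ∀ᵐ t : ℝ, (0 < t → F t = Fg t) := by
    filter_upwards [hslice0] with t ht hpos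
    apply lintegral_congr_ae
    have hnull : (volume : Measure ℝ) {s : ℝ | ω (s, t) ≠ g (s, t)} = 0 := by
      apply measure_mono_null _ ht
      intro s hs
      exact hsubM ⟨hs, hpos⟩
    have hae : ∀ᵐ s : ℝ, ω (s, t) = g (s, t) := by
      rw [ae_iff]; exact hnull
    filter_upwards [hae] with s hs
    rw [hs]
  have hFFg_prod : ∀ᵐ y : ℝ × ℝ ∂(volume : Measure (ℝ × ℝ)), (0 < y.2 → F y.2 = Fg y.2) := by
    set T := toMeasurable volume {t : ℝ | ¬ (0 < t → F t = Fg t)} with hTdef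
    have hT0 : volume T = 0 := by
      rw [hTdef, measure_toMeasurable]; exact ae_iff.mp hFFg
    have hprodnull : (volume : Measure (ℝ × ℝ)) ((univ : Set ℝ) ×ˢ T) = 0 := by
      rw [Measure.volume_eq_prod, Measure.prod_prod, hT0, mul_zero]
    rw [ae_iff]
    apply measure_mono_null _ hprodnull
    intro y hy
    exact ⟨mem_univ _, subset_toMeasurable _ _ hy⟩
  -- splitting
  set D := {y : ℝ × ℝ | sqdist x y < ρ ^ 2} with hDdef
  have hDm : MeasurableSet D := by
    have hm : Measurable fun y : ℝ × ℝ => sqdist x y := by unfold sqdist; fun_prop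
    exact measurableSet_lt hm measurable_const
  have habs_lt : ∀ y : ℝ × ℝ, y ∈ D → |y.1 - x.1| < ρ := by
    intro y hy
    have h3 : (y.1 - x.1) ^ 2 ≤ sqdist x y := by
      unfold sqdist; nlinarith [sq_nonneg (x.2 - y.2)]
    have h4 : (y.1 - x.1) ^ 2 < ρ ^ 2 := lt_of_le_of_lt h3 hy
    rw [abs_lt]; constructor <;> nlinarith
  have hy2_lt : ∀ y : ℝ × ℝ, y ∈ D → y.2 < x.2 + ρ := by
    intro y hy
    have h3 : (x.2 - y.2) ^ 2 ≤ sqdist x y := by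
      unfold sqdist; nlinarith [sq_nonneg (x.1 - y.1)]
    have h4 : (x.2 - y.2) ^ 2 < ρ ^ 2 := lt_of_le_of_lt h3 hy
    nlinarith [sq_nonneg (ρ + x.2 - y.2)]
  set c₁ := Real.sqrt 5 / π * Real.sqrt ρ with hc₁def
  have hc₁nn : 0 ≤ c₁ := by positivity
  -- I₂ : the inner mass bound
  have hI2 : ∫⁻ t in Ioo (0:ℝ) (3 * ρ), Fg t ≤ ENNReal.ofReal W₁ := by
    set Φ : ℝ × ℝ → ℝ≥0∞ := fun p => upperHalf.indicator (fun p => ENNReal.ofReal (g p)) p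
      with hΦdef
    have hΦm : Measurable Φ := (hgm.ennreal_ofReal).indicator h_upper
    have h2 : ∫⁻ t in Ioi (0:ℝ), Fg t = ∫⁻ t, ∫⁻ s, Φ (s, t) := by
      rw [← lintegral_indicator measurableSet_Ioi]
      apply lintegral_congr
      intro t
      by_cases ht : t ∈ Ioi (0:ℝ)
      · rw [Set.indicator_of_mem ht]
        apply lintegral_congr
        intro s
        have hm : (s, t) ∈ upperHalf := ht
        exact (Set.indicator_of_mem hm (fun p => ENNReal.ofReal (g p))).symm
      · rw [Set.indicator_of_notMem ht]
        symm
        have hz : ∀ s : ℝ, Φ (s, t) = 0 := by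
          intro s
          have hm : (s, t) ∉ upperHalf := ht
          exact Set.indicator_of_notMem hm (fun p => ENNReal.ofReal (g p))
        simp only [hz, lintegral_zero]
    have h3 : ∫⁻ t, ∫⁻ s, Φ (s, t) = ∫⁻ s, ∫⁻ t, Φ (s, t) := by
      apply lintegral_lintegral_swap
      exact (hΦm.comp measurable_swap).aemeasurable
    have h4 : ∫⁻ s, ∫⁻ t, Φ (s, t) = ∫⁻ p, Φ p ∂(volume : Measure (ℝ × ℝ)) := by
      rw [Measure.volume_eq_prod]
      exact (lintegral_prod Φ hΦm.aemeasurable).symm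
    have h5 : ∫⁻ p, Φ p ∂(volume : Measure (ℝ × ℝ))
        = ∫⁻ p in upperHalf, ENNReal.ofReal (g p) := lintegral_indicator h_upper _
    have h6 : ∫⁻ p in upperHalf, ENNReal.ofReal (g p)
        = ∫⁻ p in upperHalf, ENNReal.ofReal (ω p) := by
      apply lintegral_congr_ae
      filter_upwards [hgae] with p hp
      rw [hp]
    have h7 : ∫⁻ p in upperHalf, ENNReal.ofReal (ω p) = ENNReal.ofReal W₁ :=
      (ofReal_integral_eq_lintegral_ofReal hInt (Filter.Eventually.of_forall hω)).symm
    calc ∫⁻ t in Ioo (0:ℝ) (3 * ρ), Fg t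
        ≤ ∫⁻ t in Ioi (0:ℝ), Fg t := lintegral_mono_set Ioo_subset_Ioi_self
      _ = ENNReal.ofReal W₁ := by rw [h2, h3, h4, h5, h6, h7]
  -- near part
  have near : ∫⁻ y in D, ENNReal.ofReal (halfPlaneGreen x y * ω y) ∂(volume.restrict upperHalf)
      ≤ ENNReal.ofReal (4 * Real.sqrt 5 / π * (A⁻¹ * W₁)) := by
    have hres : (volume.restrict upperHalf).restrict D = volume.restrict (D ∩ upperHalf) :=
      Measure.restrict_restrict hDm
    set f₁ : ℝ → ℝ≥0∞ := fun t => ENNReal.ofReal (c₁ * |t - x.1| ^ (-(1/2) : ℝ)) with hf₁def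
    set f₂ : ℝ → ℝ≥0∞ := fun t => ENNReal.ofReal (2 / |x.1|) * Fg t with hf₂def
    have habsm : Measurable fun t : ℝ => ENNReal.ofReal (|t - x.1| ^ (-(1/2) : ℝ)) :=
      Measurable.ennreal_ofReal (((measurable_id.sub_const x.1).abs).pow_const _)
    have hf₁m : Measurable f₁ := by
      have : f₁ = fun t => ENNReal.ofReal c₁ * ENNReal.ofReal (|t - x.1| ^ (-(1/2) : ℝ)) := by
        funext t; simp only [hf₁def]; rw [ENNReal.ofReal_mul hc₁nn]
      rw [this]
      exact habsm.const_mul _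
    have hf₂m : Measurable f₂ := hFgm.const_mul _
    have hbound : ∀ᵐ y ∂(volume.restrict upperHalf).restrict D,
        ENNReal.ofReal (halfPlaneGreen x y * ω y) ≤ f₁ y.1 * f₂ y.2 := by
      rw [hres]
      have h1 : ∀ᵐ y : ℝ × ℝ ∂volume.restrict (D ∩ upperHalf), y.1 ≠ x.1 := by
        apply ae_restrict_of_ae
        rw [ae_iff]
        apply measure_mono_null _ h_line_null
        intro y hy
        simpa using hy
      have h2 : ∀ᵐ y : ℝ × ℝ ∂volume.restrict (D ∩ upperHalf), (0 < y.2 → F y.2 = Fg y.2) :=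
        ae_restrict_of_ae hFFg_prod
      filter_upwards [ae_restrict_mem (hDm.inter h_upper), h1, h2] with y hy hne hFF
      obtain ⟨hyD, hyU⟩ := hy
      have hy2 : 0 < y.2 := hyU
      have hGb := greenNearBound hρ hx2 hx2ρ hy2 hyD hne
      have hclA := claimA y hy2 (habs_lt y hyD)
      calc ENNReal.ofReal (halfPlaneGreen x y * ω y)
          = ENNReal.ofReal (halfPlaneGreen x y) * ENNReal.ofReal (ω y) :=
            ENNReal.ofReal_mul (hGpos y hy2)
        _ ≤ ENNReal.ofReal (c₁ * |y.1 - x.1| ^ (-(1/2) : ℝ))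
              * (ENNReal.ofReal (2 / |x.1|) * F y.2) := by
            apply mul_le_mul' (ENNReal.ofReal_le_ofReal _) hclA
            calc halfPlaneGreen x y
                ≤ Real.sqrt 5 / π * Real.sqrt ρ * |y.1 - x.1| ^ (-(1/2) : ℝ) := hGb
              _ = c₁ * |y.1 - x.1| ^ (-(1/2) : ℝ) := by rw [hc₁def]
        _ = f₁ y.1 * f₂ y.2 := by simp only [hf₁def, hf₂def]; rw [hFF hy2]
    have hsub : D ∩ upperHalf ⊆ (Ioo (x.1 - ρ) (x.1 + ρ)) ×ˢ (Ioo (0:ℝ) (3 * ρ)) := by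
      intro y hy
      obtain ⟨hyD, hyU⟩ := hy
      have h1 := abs_lt.mp (habs_lt y hyD)
      have h2 := hy2_lt y hyD
      exact ⟨⟨by linarith [h1.1], by linarith [h1.2]⟩, ⟨hyU, by linarith⟩⟩
    have hI1 : ∫⁻ t in Ioo (x.1 - ρ) (x.1 + ρ), f₁ t
        ≤ ENNReal.ofReal c₁ * ENNReal.ofReal (4 * Real.sqrt ρ) := by
      have heq : ∫⁻ t in Ioo (x.1 - ρ) (x.1 + ρ), f₁ t
          = ENNReal.ofReal c₁
            * ∫⁻ t in Ioo (x.1 - ρ) (x.1 + ρ), ENNReal.ofReal (|t - x.1| ^ (-(1/2) : ℝ)) := by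
        rw [← lintegral_const_mul _ habsm]
        apply lintegral_congr
        intro t
        simp only [hf₁def]
        rw [ENNReal.ofReal_mul hc₁nn]
      rw [heq]
      exact mul_le_mul_right (lint_abs_rpow_half hρ x.1) _
    have hI2' : ∫⁻ t in Ioo (0:ℝ) (3 * ρ), f₂ t
        ≤ ENNReal.ofReal (2 / |x.1|) * ENNReal.ofReal W₁ := by
      have heq : ∫⁻ t in Ioo (0:ℝ) (3 * ρ), f₂ t
          = ENNReal.ofReal (2 / |x.1|) * ∫⁻ t in Ioo (0:ℝ) (3 * ρ), Fg t := by
        rw [← lintegral_const_mul _ hFgm]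
      rw [heq]
      exact mul_le_mul_right hI2 _
    calc ∫⁻ y in D, ENNReal.ofReal (halfPlaneGreen x y * ω y) ∂(volume.restrict upperHalf)
        ≤ ∫⁻ y, f₁ y.1 * f₂ y.2 ∂(volume.restrict upperHalf).restrict D :=
          lintegral_mono_ae hbound
      _ ≤ ∫⁻ y in (Ioo (x.1 - ρ) (x.1 + ρ)) ×ˢ (Ioo (0:ℝ) (3 * ρ)), f₁ y.1 * f₂ y.2 := by
          rw [hres]
          exact lintegral_mono_set hsub
      _ = (∫⁻ t in Ioo (x.1 - ρ) (x.1 + ρ), f₁ t) * ∫⁻ t in Ioo (0:ℝ) (3 * ρ), f₂ t := by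
          rw [Measure.volume_eq_prod, ← Measure.prod_restrict]
          exact lintegral_prod_mul hf₁m.aemeasurable hf₂m.aemeasurable
      _ ≤ (ENNReal.ofReal c₁ * ENNReal.ofReal (4 * Real.sqrt ρ))
            * (ENNReal.ofReal (2 / |x.1|) * ENNReal.ofReal W₁) := mul_le_mul' hI1 hI2'
      _ = ENNReal.ofReal (4 * Real.sqrt 5 / π * (A⁻¹ * W₁)) := by
          rw [← ENNReal.ofReal_mul hc₁nn, ← ENNReal.ofReal_mul (by positivity),
            ← ENNReal.ofReal_mul (by positivity)]
          congr 1
          have hs2 : 2 * A * (Real.sqrt ρ * Real.sqrt ρ) = |x.1| := by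
            rw [Real.mul_self_sqrt hρ.le, hρdef]; field_simp
          rw [hc₁def]
          field_simp
          linear_combination W₁ * hs2
  -- far part
  have far : ∫⁻ y in Dᶜ, ENNReal.ofReal (halfPlaneGreen x y * ω y) ∂(volume.restrict upperHalf)
      ≤ ENNReal.ofReal (4 / π * (x.2 * (A / x.1) ^ 2 * W₂)) := by
    have hres : (volume.restrict upperHalf).restrict Dᶜ = volume.restrict (Dᶜ ∩ upperHalf) :=
      Measure.restrict_restrict hDm.compl
    set c₂ := x.2 / (π * ρ ^ 2) with hc₂def
    have hc₂nn : 0 ≤ c₂ := by positivity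
    have hptwise : ∀ᵐ y ∂(volume.restrict upperHalf).restrict Dᶜ,
        ENNReal.ofReal (halfPlaneGreen x y * ω y) ≤ ENNReal.ofReal (c₂ * (y.2 * ω y)) := by
      rw [hres]
      filter_upwards [ae_restrict_mem (hDm.compl.inter h_upper)] with y hy
      obtain ⟨hyD, hyU⟩ := hy
      have hy2 : 0 < y.2 := hyU
      have hs_ge : ρ ^ 2 ≤ sqdist x y := not_lt.mp hyD
      have hs_pos : 0 < sqdist x y := lt_of_lt_of_le (by positivity) hs_ge
      apply ENNReal.ofReal_le_ofReal
      have hG : halfPlaneGreen x y ≤ c₂ * y.2 := by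
        unfold halfPlaneGreen
        have hl : Real.log (1 + 4 * x.2 * y.2 / sqdist x y) ≤ 4 * x.2 * y.2 / sqdist x y := by
          have hq : 0 ≤ 4 * x.2 * y.2 / sqdist x y := by positivity
          have := Real.log_le_sub_one_of_pos
            (show 0 < 1 + 4 * x.2 * y.2 / sqdist x y by linarith)
          linarith
        calc (1 / (4 * π)) * Real.log (1 + 4 * x.2 * y.2 / sqdist x y)
            ≤ (1 / (4 * π)) * (4 * x.2 * y.2 / sqdist x y) :=
              mul_le_mul_of_nonneg_left hl (by positivity)
          _ ≤ (1 / (4 * π)) * (4 * x.2 * y.2 / ρ ^ 2) := by gcongr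
          _ = c₂ * y.2 := by rw [hc₂def]; field_simp
      calc halfPlaneGreen x y * ω y ≤ (c₂ * y.2) * ω y :=
            mul_le_mul_of_nonneg_right hG (hω y)
        _ = c₂ * (y.2 * ω y) := by ring
    have haem : AEMeasurable (fun y : ℝ × ℝ => ENNReal.ofReal (y.2 * ω y))
        (volume.restrict upperHalf) := hInt2.1.aemeasurable.ennreal_ofReal
    have hae2 : 0 ≤ᵐ[volume.restrict upperHalf] fun y : ℝ × ℝ => y.2 * ω y := by
      filter_upwards [ae_restrict_mem h_upper] with p hp
      exact mul_nonneg (le_of_lt hp) (hω p)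
    calc ∫⁻ y in Dᶜ, ENNReal.ofReal (halfPlaneGreen x y * ω y) ∂(volume.restrict upperHalf)
        ≤ ∫⁻ y, ENNReal.ofReal (c₂ * (y.2 * ω y))
            ∂(volume.restrict upperHalf).restrict Dᶜ := lintegral_mono_ae hptwise
      _ ≤ ∫⁻ y, ENNReal.ofReal (c₂ * (y.2 * ω y)) ∂(volume.restrict upperHalf) := by
          rw [hres]
          exact lintegral_mono_set inter_subset_right
      _ = ∫⁻ y, ENNReal.ofReal c₂ * ENNReal.ofReal (y.2 * ω y)
            ∂(volume.restrict upperHalf) := by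
          apply lintegral_congr
          intro y
          rw [ENNReal.ofReal_mul hc₂nn]
      _ = ENNReal.ofReal c₂ * ∫⁻ y, ENNReal.ofReal (y.2 * ω y)
            ∂(volume.restrict upperHalf) := lintegral_const_mul'' _ haem
      _ = ENNReal.ofReal c₂ * ENNReal.ofReal W₂ := by
          rw [← ofReal_integral_eq_lintegral_ofReal hInt2 hae2]
      _ = ENNReal.ofReal (c₂ * W₂) := (ENNReal.ofReal_mul hc₂nn).symm
      _ = ENNReal.ofReal (4 / π * (x.2 * (A / x.1) ^ 2 * W₂)) := by
          congr 1
          rw [hc₂def, hρdef]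
          have hsq : |x.1| ^ 2 = x.1 ^ 2 := sq_abs x.1
          field_simp
          nlinarith [hsq, habs, hA0, hx2]
  -- combine
  set T₁ := Real.sqrt (x.2 / A) * W₁ ^ ((1:ℝ) / 2)
      * (∫ p in upperHalf, (ω p) ^ 2) ^ ((1:ℝ) / 4) with hT₁def
  have hT₁nn : 0 ≤ T₁ := by
    apply mul_nonneg (mul_nonneg (Real.sqrt_nonneg _) (Real.rpow_nonneg hW₁ _))
    exact Real.rpow_nonneg (integral_nonneg fun p => sq_nonneg _) _
  have hA₁nn : 0 ≤ A⁻¹ * W₁ := mul_nonneg (by positivity) hW₁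
  have hA₂nn : 0 ≤ x.2 * (A / x.1) ^ 2 * W₂ :=
    mul_nonneg (mul_nonneg hx2.le (sq_nonneg _)) hW₂
  have h5le : Real.sqrt 5 ≤ 3 := by
    nlinarith [Real.sq_sqrt (show (0:ℝ) ≤ 5 by norm_num), Real.sqrt_nonneg (5:ℝ)]
  have hπ3 : 3 < π := Real.pi_gt_three
  have hc : 4 * Real.sqrt 5 / π ≤ 10 := by
    rw [div_le_iff₀ hπ]
    nlinarith
  have hc2 : 4 / π ≤ 10 := by
    rw [div_le_iff₀ hπ]
    nlinarith
  have hBle : 4 * Real.sqrt 5 / π * (A⁻¹ * W₁) + 4 / π * (x.2 * (A / x.1) ^ 2 * W₂)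
      ≤ 10 * (T₁ + A⁻¹ * W₁ + x.2 * (A / x.1) ^ 2 * W₂) := by
    nlinarith [mul_le_mul_of_nonneg_right hc hA₁nn, mul_le_mul_of_nonneg_right hc2 hA₂nn]
  have hRHS0 : 0 ≤ 10 * (T₁ + A⁻¹ * W₁ + x.2 * (A / x.1) ^ 2 * W₂) := by
    nlinarith
  have key : ∫⁻ y in upperHalf, ENNReal.ofReal (halfPlaneGreen x y * ω y)
      ≤ ENNReal.ofReal (10 * (T₁ + A⁻¹ * W₁ + x.2 * (A / x.1) ^ 2 * W₂)) := by
    calc ∫⁻ y in upperHalf, ENNReal.ofReal (halfPlaneGreen x y * ω y)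
        = (∫⁻ y in D, ENNReal.ofReal (halfPlaneGreen x y * ω y) ∂(volume.restrict upperHalf))
          + ∫⁻ y in Dᶜ, ENNReal.ofReal (halfPlaneGreen x y * ω y)
            ∂(volume.restrict upperHalf) := (lintegral_add_compl _ hDm).symm
      _ ≤ ENNReal.ofReal (4 * Real.sqrt 5 / π * (A⁻¹ * W₁))
          + ENNReal.ofReal (4 / π * (x.2 * (A / x.1) ^ 2 * W₂)) := add_le_add near far
      _ = ENNReal.ofReal (4 * Real.sqrt 5 / π * (A⁻¹ * W₁)
          + 4 / π * (x.2 * (A / x.1) ^ 2 * W₂)) := by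
          rw [← ENNReal.ofReal_add (by positivity) (by positivity)]
      _ ≤ ENNReal.ofReal (10 * (T₁ + A⁻¹ * W₁ + x.2 * (A / x.1) ^ 2 * W₂)) :=
          ENNReal.ofReal_le_ofReal hBle
  exact ENNReal.toReal_le_of_le_ofReal hRHS0 key
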